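/- Let n, t be natural numbers, λ > 0 and B ≥ 0 real numbers, and set κ = 1/(s(B)·(1 − s(B))). Let v_1, …, v_t ∈ ℝ^n with ‖v_τ‖ ≤ 1 for all τ, let V = λκ·I_n + Σ_{τ=1}^t v_τ v_τᵀ (which is positive definite, hence invertible), and define g : ℝ^n → ℝ^n by g(θ) = λ·θ + Σ_{τ=1}^t s(⟨θ, v_τ⟩)·v_τ. Then for all θ₁, θ₂ ∈ ℝ^n with ‖θ₁‖ ≤ B and ‖θ₂‖ ≤ B, (θ₁ − θ₂)ᵀ V (θ₁ − θ₂) ≤ κ² · (g(θ₁) − g(θ₂))ᵀ V⁻¹ (g(θ₁) − g(θ₂)). -/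

import Mathlib

open Matrix

noncomputable def sigmoid (z : ℝ) : ℝ := 1 / (1 + Real.exp (-z))

lemma sigmoid_pos (z : ℝ) : 0 < sigmoid z := by
  unfold sigmoid; positivity

lemma sigmoid_lt_one (z : ℝ) : sigmoid z < 1 := by
  unfold sigmoid
  rw [div_lt_one (by positivity)]
  linarith [Real.exp_pos (-z)]

lemma sigmoid_mono : Monotone sigmoid := by
  intro a b hab
  unfold sigmoid
  apply one_div_le_one_div_of_le (by positivity)
  have := Real.exp_le_exp.mpr (neg_le_neg hab)
  linarith

lemma sigmoid_neg (z : ℝ) : sigmoid (-z) = 1 - sigmoid z := by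
  unfold sigmoid
  rw [neg_neg]
  have h1 : (0:ℝ) < 1 + Real.exp z := by positivity
  have h2 : (0:ℝ) < 1 + Real.exp (-z) := by positivity
  have hm : Real.exp z * Real.exp (-z) = 1 := by
    rw [← Real.exp_add]; simp
  field_simp
  nlinarith [hm]

lemma sigmoid_hasDerivAt (z : ℝ) :
    HasDerivAt sigmoid (sigmoid z * (1 - sigmoid z)) z := by
  have h0 : (0:ℝ) < 1 + Real.exp (-z) := by positivity
  have h1 : HasDerivAt (fun x : ℝ => 1 + Real.exp (-x)) (-Real.exp (-z)) z := by
    have h := (Real.hasDerivAt_exp (-z)).comp z (hasDerivAt_neg z)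
    have := h.const_add (1:ℝ)
    simpa [mul_comm] using this
  have h2 := h1.inv h0.ne'
  have heq : sigmoid z * (1 - sigmoid z) = -(-Real.exp (-z)) / (1 + Real.exp (-z)) ^ 2 := by
    unfold sigmoid
    field_simp
    ring
  rw [heq]
  have : sigmoid = fun x : ℝ => (1 + Real.exp (-x))⁻¹ := by
    ext x; simp [sigmoid, one_div]
  rw [this]
  exact h2

lemma sigmoid_continuous : Continuous sigmoid := by
  unfold sigmoid
  exact continuous_const.div (by continuity) (fun x => by positivity)

lemma sigmoid_deriv_lower {B c : ℝ} (hc : |c| ≤ B) :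
    sigmoid B * (1 - sigmoid B) ≤ sigmoid c * (1 - sigmoid c) := by
  have h1 : sigmoid c ≤ sigmoid B := sigmoid_mono (le_of_abs_le hc)
  have h2 : 1 - sigmoid B ≤ sigmoid c := by
    rw [← sigmoid_neg]; exact sigmoid_mono (neg_le_of_abs_le hc)
  nlinarith

lemma sigmoid_slope {B a b : ℝ} (ha : |a| ≤ B) (hb : |b| ≤ B) :
    ∃ d, sigmoid B * (1 - sigmoid B) ≤ d ∧ sigmoid a - sigmoid b = d * (a - b) := by
  have key : ∀ p q : ℝ, p < q → |p| ≤ B → |q| ≤ B →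
      ∃ d, sigmoid B * (1 - sigmoid B) ≤ d ∧ sigmoid q - sigmoid p = d * (q - p) := by
    intro p q hpq hp hq
    obtain ⟨c, hc, hceq⟩ := exists_hasDerivAt_eq_slope sigmoid
      (fun z => sigmoid z * (1 - sigmoid z)) hpq
      (sigmoid_continuous.continuousOn) (fun x _ => sigmoid_hasDerivAt x)
    refine ⟨sigmoid c * (1 - sigmoid c), ?_, ?_⟩
    · apply sigmoid_deriv_lower
      rw [abs_le] at *
      constructor <;> [linarith [hc.1]; linarith [hc.2]]
    · rw [hceq, div_mul_cancel₀]
      exact sub_ne_zero.mpr hpq.ne'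
  rcases lt_trichotomy a b with h | h | h
  · obtain ⟨d, hd1, hd2⟩ := key a b h ha hb
    exact ⟨d, hd1, by linarith [hd2]⟩
  · exact ⟨sigmoid B * (1 - sigmoid B), le_refl _, by rw [h]; ring⟩
  · obtain ⟨d, hd1, hd2⟩ := key b a h hb ha
    exact ⟨d, hd1, by linarith [hd2]⟩

section helpers
variable {n t : ℕ}

lemma sum_mulVec' (M : Fin t → Matrix (Fin n) (Fin n) ℝ) (x : Fin n → ℝ) :
    (∑ τ, M τ) *ᵥ x = ∑ τ, (M τ *ᵥ x) := by
  ext i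
  simp only [Matrix.mulVec, dotProduct, Matrix.sum_apply, Finset.sum_apply, Finset.sum_mul]
  rw [Finset.sum_comm]

lemma dot_sum (x : Fin n → ℝ) (w : Fin t → Fin n → ℝ) :
    x ⬝ᵥ (∑ τ, w τ) = ∑ τ, x ⬝ᵥ w τ := by
  simp only [dotProduct, Finset.sum_apply, Finset.mul_sum]
  exact Finset.sum_comm

lemma sum_dot (x : Fin n → ℝ) (w : Fin t → Fin n → ℝ) :
    (∑ τ, w τ) ⬝ᵥ x = ∑ τ, w τ ⬝ᵥ x := by
  rw [dotProduct_comm, dot_sum]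
  simp [dotProduct_comm]

lemma vecMulVec_mulVec' (w u x : Fin n → ℝ) :
    (vecMulVec w u) *ᵥ x = (u ⬝ᵥ x) • w := by
  ext i
  simp only [Matrix.mulVec, dotProduct, vecMulVec_apply, Pi.smul_apply, smul_eq_mul,
    Finset.sum_mul, Finset.mul_sum]
  congr 1; ext j; ring

lemma vecMulVec_posSemidef (u : Fin n → ℝ) : (vecMulVec u u).PosSemidef := by
  rw [Matrix.posSemidef_iff_dotProduct_mulVec]
  constructor
  · ext i j
    simp [conjTranspose_apply, vecMulVec_apply, mul_comm]
  · intro x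
    rw [vecMulVec_mulVec', dotProduct_smul]
    simp only [star_trivial, smul_eq_mul]
    have : x ⬝ᵥ u = u ⬝ᵥ x := dotProduct_comm _ _
    rw [this]
    exact mul_self_nonneg _

lemma psd_sum (v : Fin t → Fin n → ℝ) : (∑ τ, vecMulVec (v τ) (v τ)).PosSemidef := by
  rw [Matrix.posSemidef_iff_dotProduct_mulVec]
  constructor
  · show (∑ τ, vecMulVec (v τ) (v τ))ᴴ = _
    rw [conjTranspose_sum]
    exact Finset.sum_congr rfl fun τ _ => (vecMulVec_posSemidef (v τ)).1
  · intro x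
    rw [sum_mulVec', dot_sum]
    apply Finset.sum_nonneg
    intro τ _
    exact (vecMulVec_posSemidef (v τ)).dotProduct_mulVec_nonneg x

lemma smul_one_posDef {c : ℝ} (hc : 0 < c) :
    ((c • (1 : Matrix (Fin n) (Fin n) ℝ))).PosDef := by
  rw [Matrix.posDef_iff_dotProduct_mulVec]
  constructor
  · simp [Matrix.IsHermitian, conjTranspose_smul]
  · intro x hx
    rw [smul_mulVec, one_mulVec, dotProduct_smul]
    simp only [star_trivial, smul_eq_mul]
    have hxx : 0 < x ⬝ᵥ x := by
      have := Matrix.dotProduct_star_self_pos_iff (v := x) |>.mpr hx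
      simpa using this
    exact mul_pos hc hxx

open scoped MatrixOrder in
lemma psd_cauchy {A : Matrix (Fin n) (Fin n) ℝ} (hA : A.PosSemidef) (x y : Fin n → ℝ) :
    (x ⬝ᵥ (A *ᵥ y)) ^ 2 ≤ (x ⬝ᵥ (A *ᵥ x)) * (y ⬝ᵥ (A *ᵥ y)) := by
  set S := CFC.sqrt A with hSdef
  have hS : S * S = A := CFC.sqrt_mul_sqrt_self A hA.nonneg
  have hsym : Sᵀ = S := by
    have := (CFC.sqrt_nonneg A).posSemidef.1
    exact (conjTranspose_eq_transpose_of_trivial S).symm.trans this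
  have key : ∀ a b : Fin n → ℝ, a ⬝ᵥ (A *ᵥ b) = (S *ᵥ a) ⬝ᵥ (S *ᵥ b) := by
    intro a b
    rw [← hS, ← mulVec_mulVec, dotProduct_mulVec, ← mulVec_transpose, hsym]
  rw [key x y, key x x, key y y]
  set a := S *ᵥ x
  set b := S *ᵥ y
  have := Finset.sum_mul_sq_le_sq_mul_sq Finset.univ a b
  simp only [dotProduct]
  calc (∑ i, a i * b i) ^ 2 ≤ (∑ i, a i ^ 2) * (∑ i, b i ^ 2) := this
    _ = (∑ i, a i * a i) * (∑ i, b i * b i) := by simp [sq]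

end helpers

lemma abs_dot_le {n : ℕ} {B : ℝ} (hB : 0 ≤ B) {θ u : Fin n → ℝ}
    (hθ : Real.sqrt (∑ i, θ i ^ 2) ≤ B) (hu : Real.sqrt (∑ i, u i ^ 2) ≤ 1) :
    |θ ⬝ᵥ u| ≤ B := by
  have hnn1 : (0:ℝ) ≤ ∑ i, θ i ^ 2 := Finset.sum_nonneg fun i _ => sq_nonneg (θ i)
  have hnn2 : (0:ℝ) ≤ ∑ i, u i ^ 2 := Finset.sum_nonneg fun i _ => sq_nonneg (u i)
  have h1 : (∑ i, θ i ^ 2) ≤ B ^ 2 := by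
    nlinarith [Real.sq_sqrt hnn1, Real.sqrt_nonneg (∑ i, θ i ^ 2)]
  have h2 : (∑ i, u i ^ 2) ≤ 1 := by
    nlinarith [Real.sq_sqrt hnn2, Real.sqrt_nonneg (∑ i, u i ^ 2)]
  have hcs : (θ ⬝ᵥ u) ^ 2 ≤ (∑ i, θ i ^ 2) * (∑ i, u i ^ 2) :=
    Finset.sum_mul_sq_le_sq_mul_sq Finset.univ θ u
  have : (θ ⬝ᵥ u) ^ 2 ≤ B ^ 2 := by
    nlinarith [Finset.sum_nonneg fun i (_ : i ∈ Finset.univ) => sq_nonneg (u i)]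
  calc |θ ⬝ᵥ u| = Real.sqrt ((θ ⬝ᵥ u) ^ 2) := (Real.sqrt_sq_eq_abs _).symm
    _ ≤ Real.sqrt (B ^ 2) := Real.sqrt_le_sqrt this
    _ = B := by rw [Real.sqrt_sq hB]

theorem quadratic_form_bound_via_gradient
    (n t : ℕ) (lam B κ : ℝ) (hlam : 0 < lam) (hB : 0 ≤ B)
    (hκ : κ = 1 / (sigmoid B * (1 - sigmoid B)))
    (v : Fin t → (Fin n → ℝ))
    (hv : ∀ τ, Real.sqrt (∑ i, v τ i ^ 2) ≤ 1)
    (V : Matrix (Fin n) (Fin n) ℝ)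
    (hV : V = (lam * κ) • (1 : Matrix (Fin n) (Fin n) ℝ) +
        ∑ τ, vecMulVec (v τ) (v τ))
    (g : (Fin n → ℝ) → (Fin n → ℝ))
    (hg : ∀ θ, g θ = lam • θ + ∑ τ, sigmoid (θ ⬝ᵥ v τ) • v τ) :
    V.PosDef ∧
      ∀ θ₁ θ₂ : Fin n → ℝ,
        Real.sqrt (∑ i, θ₁ i ^ 2) ≤ B → Real.sqrt (∑ i, θ₂ i ^ 2) ≤ B →
          (θ₁ - θ₂) ⬝ᵥ (V *ᵥ (θ₁ - θ₂)) ≤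
            κ ^ 2 * ((g θ₁ - g θ₂) ⬝ᵥ (V⁻¹ *ᵥ (g θ₁ - g θ₂))) := by
  set μ := sigmoid B * (1 - sigmoid B) with hμdef
  have hμ : 0 < μ := mul_pos (sigmoid_pos B) (by linarith [sigmoid_lt_one B])
  have hκpos : 0 < κ := by rw [hκ]; positivity
  have hμκ : μ * κ = 1 := by rw [hκ]; field_simp
  -- positive definiteness
  have hVpd : V.PosDef := by
    rw [hV]
    exact Matrix.PosDef.add_posSemidef (smul_one_posDef (by positivity)) (psd_sum v)
  refine ⟨hVpd, ?_⟩
  intro θ₁ θ₂ hθ₁ hθ₂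
  set x := θ₁ - θ₂ with hxdef
  set w := g θ₁ - g θ₂ with hwdef
  set Q := x ⬝ᵥ (V *ᵥ x) with hQdef
  set R := w ⬝ᵥ (V⁻¹ *ᵥ w) with hRdef
  -- quadratic form expansion
  have hQ : Q = lam * κ * (x ⬝ᵥ x) + ∑ τ, (v τ ⬝ᵥ x) ^ 2 := by
    rw [hQdef, hV, add_mulVec, dotProduct_add, smul_mulVec, one_mulVec,
      dotProduct_smul, sum_mulVec', dot_sum, smul_eq_mul]
    congr 1
    refine Finset.sum_congr rfl fun τ _ => ?_
    rw [vecMulVec_mulVec', dotProduct_smul, smul_eq_mul, dotProduct_comm x (v τ), sq]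
  -- the slope coefficients
  have habs : ∀ (θ : Fin n → ℝ), Real.sqrt (∑ i, θ i ^ 2) ≤ B → ∀ τ, |θ ⬝ᵥ v τ| ≤ B :=
    fun θ hθ τ => abs_dot_le hB hθ (hv τ)
  have hslopes : ∀ τ : Fin t, ∃ d, μ ≤ d ∧
      sigmoid (θ₁ ⬝ᵥ v τ) - sigmoid (θ₂ ⬝ᵥ v τ) = d * (x ⬝ᵥ v τ) := by
    intro τ
    obtain ⟨d, hd1, hd2⟩ := sigmoid_slope (habs θ₁ hθ₁ τ) (habs θ₂ hθ₂ τ)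
    exact ⟨d, hd1, by rw [hxdef, sub_dotProduct]; exact hd2⟩
  choose d hd1 hd2 using hslopes
  -- decomposition of w
  have hw : w = lam • x + ∑ τ, (d τ * (x ⬝ᵥ v τ)) • v τ := by
    rw [hwdef, hg θ₁, hg θ₂, hxdef, smul_sub]
    rw [add_sub_add_comm, ← Finset.sum_sub_distrib]
    congr 1
    refine Finset.sum_congr rfl fun τ _ => ?_
    rw [← sub_smul, hd2 τ]
  -- w ⬝ᵥ x
  have hwx : w ⬝ᵥ x = lam * (x ⬝ᵥ x) + ∑ τ, d τ * (v τ ⬝ᵥ x) ^ 2 := by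
    rw [hw, add_dotProduct, smul_dotProduct, sum_dot, smul_eq_mul]
    congr 1
    refine Finset.sum_congr rfl fun τ _ => ?_
    rw [smul_dotProduct, smul_eq_mul, dotProduct_comm x (v τ)]
    ring
  have hlow : μ * Q ≤ w ⬝ᵥ x := by
    have hmuQ : μ * Q = lam * (x ⬝ᵥ x) + ∑ τ, μ * (v τ ⬝ᵥ x) ^ 2 := by
      rw [hQ, mul_add, Finset.mul_sum]
      congr 1
      linear_combination (lam * (x ⬝ᵥ x)) * hμκ
    rw [hmuQ, hwx]
    apply add_le_add_right
    exact Finset.sum_le_sum fun τ _ => mul_le_mul_of_nonneg_right (hd1 τ) (sq_nonneg _)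
  -- V inverse facts
  have hVdet : IsUnit V.det := (Matrix.isUnit_iff_isUnit_det _).mp hVpd.isUnit
  have hVinv : V⁻¹ *ᵥ (V *ᵥ x) = x := by
    rw [mulVec_mulVec, Matrix.nonsing_inv_mul _ hVdet, one_mulVec]
  have hVinv_psd : (V⁻¹).PosSemidef := hVpd.inv.posSemidef
  have hQ0 : 0 ≤ Q := by
    have := hVpd.posSemidef.dotProduct_mulVec_nonneg x
    simpa using this
  have hR0 : 0 ≤ R := by
    have := hVinv_psd.dotProduct_mulVec_nonneg w
    simpa using this
  -- Cauchy-Schwarz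
  have hCS : (w ⬝ᵥ x) ^ 2 ≤ R * Q := by
    have h := psd_cauchy hVinv_psd w (V *ᵥ x)
    rw [hVinv, dotProduct_comm (V *ᵥ x) x] at h
    exact h
  rcases eq_or_lt_of_le hQ0 with hQeq | hQpos
  · rw [← hQeq]
    positivity
  · have hsq : (μ * Q) ^ 2 ≤ (w ⬝ᵥ x) ^ 2 := by
      have h0 : 0 ≤ μ * Q := by positivity
      exact pow_le_pow_left₀ h0 hlow 2
    have h1 : μ ^ 2 * Q ≤ R := by nlinarith [hsq.trans hCS]
    calc Q = κ ^ 2 * (μ ^ 2 * Q) := by linear_combination (-Q * (μ * κ + 1)) * hμκ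
      _ ≤ κ ^ 2 * R := by
        apply mul_le_mul_of_nonneg_left h1 (sq_nonneg κ)
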